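/- For every integer k ≥ 0 and every real A > 0 there exists a constant C = C(A,k) > 0 such that for all n ≥ 1 and every interval I ⊆ ℝ of length at most A/n, E[ sup_{y ∈ I} |X_n^{(k)}(y)| ] ≤ C · n^{k + 1/2}. -/

import Mathlib

open MeasureTheory ProbabilityTheory Filter Real
open scoped ENNReal NNReal

lemma gpdf_eq (x : ℝ) : gaussianPDFReal 0 1 x = (√(2 * π))⁻¹ * rexp (-(2⁻¹) * x ^ 2) := by
  simp only [gaussianPDFReal, NNReal.coe_one, mul_one, sub_zero]
  ring_nf

lemma g_density : gaussianReal 0 1 =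
    (volume : Measure ℝ).withDensity (fun x => ((gaussianPDFReal 0 1 x).toNNReal : ℝ≥0∞)) := by
  rw [gaussianReal_of_var_ne_zero 0 one_ne_zero]
  congr 1

lemma g_integral (g : ℝ → ℝ) :
    ∫ x, g x ∂(gaussianReal 0 1) = ∫ x, gaussianPDFReal 0 1 x * g x := by
  rw [g_density, integral_withDensity_eq_integral_smul
    (measurable_gaussianPDFReal 0 1).real_toNNReal g]
  congr 1; ext x
  simp [NNReal.smul_def, Real.coe_toNNReal _ (gaussianPDFReal_nonneg 0 1 x)]

lemma g_integrable_iff (g : ℝ → ℝ) :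
    Integrable g (gaussianReal 0 1) ↔ Integrable (fun x => gaussianPDFReal 0 1 x * g x) := by
  rw [g_density, integrable_withDensity_iff_integrable_smul
    (measurable_gaussianPDFReal 0 1).real_toNNReal]
  constructor <;> intro h <;>
  · refine h.congr (Eventually.of_forall fun x => ?_)
    simp [NNReal.smul_def, Real.coe_toNNReal _ (gaussianPDFReal_nonneg 0 1 x)]

lemma g_int_sq : Integrable (fun x => x ^ 2) (gaussianReal 0 1) := by
  rw [g_integrable_iff]
  have h := (integrable_rpow_mul_exp_neg_mul_sq (b := 2⁻¹) (by norm_num)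
    (s := 2) (by norm_num)).const_mul (√(2 * π))⁻¹
  refine h.congr (Eventually.of_forall fun x => ?_)
  simp only [gpdf_eq]
  rw [show (x : ℝ) ^ (2:ℝ) = x ^ 2 from Real.rpow_natCast x 2]
  ring

lemma g_int_id : Integrable (fun x => x) (gaussianReal 0 1) := by
  rw [g_integrable_iff]
  have h := (integrable_mul_exp_neg_mul_sq (b := 2⁻¹) (by norm_num)).const_mul (√(2 * π))⁻¹
  refine h.congr (Eventually.of_forall fun x => ?_)
  simp only [gpdf_eq]; ring

lemma g_mean : ∫ x, x ∂(gaussianReal 0 1) = 0 := by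
  have hmap : (gaussianReal 0 1).map (fun x => (-1 : ℝ) * x) = gaussianReal 0 1 := by
    have := gaussianReal_map_const_mul (μ := 0) (v := 1) (-1)
    simpa using this
  have h : ∫ x, x ∂(gaussianReal 0 1) = ∫ x, (-1 : ℝ) * x ∂(gaussianReal 0 1) := by
    conv_lhs => rw [← hmap]
    exact (integral_map (φ := fun x : ℝ => (-1:ℝ) * x) (f := fun y : ℝ => y)
      (by fun_prop) measurable_id.aestronglyMeasurable)
  have h2 : ∫ x, (-1 : ℝ) * x ∂(gaussianReal 0 1) = -∫ x, x ∂(gaussianReal 0 1) := by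
    simp_rw [neg_one_mul]
    exact integral_neg _
  rw [h2] at h
  linarith


noncomputable def Sf (c : ℕ → ℝ) (n m : ℕ) : ℝ → ℝ :=
  fun y => ∑ j ∈ Finset.range (n + 1), c j * ((j : ℝ) ^ m * Real.cos ((j : ℝ) * y + m * (π / 2)))

lemma Sf_cont (c : ℕ → ℝ) (n m : ℕ) : Continuous (Sf c n m) := by
  unfold Sf; fun_prop

lemma Sf_hasDerivAt (c : ℕ → ℝ) (n m : ℕ) (y : ℝ) :
    HasDerivAt (Sf c n m) (Sf c n (m + 1) y) y := by
  unfold Sf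
  refine HasDerivAt.fun_sum fun j _ => ?_
  have h1 : HasDerivAt (fun y : ℝ => (j : ℝ) * y + m * (π / 2)) (j : ℝ) y := by
    simpa using ((hasDerivAt_id y).const_mul (j : ℝ)).add_const ((m : ℝ) * (π / 2))
  have h2 := (Real.hasDerivAt_cos ((j : ℝ) * y + m * (π / 2))).comp y h1
  have h3 := h2.const_mul (c j * (j : ℝ) ^ m)
  convert h3 using 1
  · rfl
  · ext z; simp only [Function.comp_apply]; ring
  · have hc : Real.cos ((j : ℝ) * y + ((m : ℕ) + 1 : ℕ) * (π / 2))
        = -Real.sin ((j : ℝ) * y + m * (π / 2)) := by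
      push_cast
      rw [show (j : ℝ) * y + ((m : ℝ) + 1) * (π / 2) = ((j : ℝ) * y + m * (π / 2)) + π / 2 by ring,
        Real.cos_add_pi_div_two]
    rw [hc, pow_succ]
    ring

lemma closedForm (c : ℕ → ℝ) (n m : ℕ) :
    iteratedDeriv m (fun x => ∑ j ∈ Finset.range (n + 1), c j * Real.cos ((j : ℝ) * x))
      = Sf c n m := by
  induction m with
  | zero =>
    rw [iteratedDeriv_zero]
    ext y
    unfold Sf
    simp
  | succ m ih =>
    rw [iteratedDeriv_succ, ih]
    ext y
    exact (Sf_hasDerivAt c n m y).deriv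

lemma ftc_bound (c : ℕ → ℝ) (n m : ℕ) {a b y : ℝ} (hay : a ≤ y) (hyb : y ≤ b) :
    |Sf c n m y| ≤ |Sf c n m a| + ∫ t in Set.Ioc a b, |Sf c n (m + 1) t| := by
  have hab : a ≤ b := hay.trans hyb
  have hcont := Sf_cont c n (m + 1)
  have key : ∫ t in a..y, Sf c n (m + 1) t = Sf c n m y - Sf c n m a :=
    intervalIntegral.integral_eq_sub_of_hasDerivAt
      (fun t _ => Sf_hasDerivAt c n m t) (hcont.intervalIntegrable a y)
  have h1 : |Sf c n m y - Sf c n m a| ≤ ∫ t in a..y, |Sf c n (m + 1) t| := by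
    rw [← key]
    exact intervalIntegral.abs_integral_le_integral_abs hay
  have h2 : ∫ t in a..y, |Sf c n (m + 1) t| ≤ ∫ t in a..b, |Sf c n (m + 1) t| := by
    have hadd : (∫ t in a..y, |Sf c n (m + 1) t|) + ∫ t in y..b, |Sf c n (m + 1) t|
        = ∫ t in a..b, |Sf c n (m + 1) t| :=
      intervalIntegral.integral_add_adjacent_intervals
        (hcont.abs.intervalIntegrable a y) (hcont.abs.intervalIntegrable y b)
    have hnn : 0 ≤ ∫ t in y..b, |Sf c n (m + 1) t| :=
      intervalIntegral.integral_nonneg hyb fun t _ => abs_nonneg _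
    linarith
  have h3 : ∫ t in a..b, |Sf c n (m + 1) t| = ∫ t in Set.Ioc a b, |Sf c n (m + 1) t| :=
    intervalIntegral.integral_of_le hab
  calc |Sf c n m y| ≤ |Sf c n m a| + |Sf c n m y - Sf c n m a| := by
        have := abs_sub_abs_le_abs_sub (Sf c n m y) (Sf c n m a)
        linarith [abs_nonneg (Sf c n m y - Sf c n m a)]
    _ ≤ _ := by rw [← h3]; linarith



noncomputable def gM : ℝ := ∫ x, x ^ 2 ∂(gaussianReal 0 1)

lemma gM_nonneg : 0 ≤ gM := integral_nonneg fun x => sq_nonneg x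

section eps
set_option linter.unusedSectionVars false
variable {Ω : Type*} [MeasurableSpace Ω] {μ : Measure Ω} [IsProbabilityMeasure μ]
  {ε : ℕ → Ω → ℝ} (hmeas : ∀ k, Measurable (ε k))
  (hgauss : ∀ k, Measure.map (ε k) μ = gaussianReal 0 1)

include hmeas hgauss

lemma eps_int (j : ℕ) : Integrable (ε j) μ :=
  (integrable_map_measure (f := ε j) (g := fun x => x) measurable_id.aestronglyMeasurable
    (hmeas j).aemeasurable).mp (by rw [hgauss j]; exact g_int_id)

lemma eps_int_sq (j : ℕ) : Integrable (fun ω => (ε j ω) ^ 2) μ :=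
  (integrable_map_measure (f := ε j) (g := fun x => x ^ 2) (by fun_prop)
    (hmeas j).aemeasurable).mp (by rw [hgauss j]; exact g_int_sq)

lemma eps_mean (j : ℕ) : ∫ ω, ε j ω ∂μ = 0 := by
  have h := integral_map (φ := ε j) (f := fun x : ℝ => x) (μ := μ)
    (hmeas j).aemeasurable measurable_id.aestronglyMeasurable
  rw [hgauss j, g_mean] at h
  exact h.symm

lemma eps_sq (j : ℕ) : ∫ ω, (ε j ω) ^ 2 ∂μ = gM := by
  have h := integral_map (φ := ε j) (f := fun x : ℝ => x ^ 2) (μ := μ)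
    (hmeas j).aemeasurable (by fun_prop)
  rw [hgauss j] at h
  exact h.symm

lemma eps_int_mul (i j : ℕ) : Integrable (fun ω => ε i ω * ε j ω) μ := by
  refine Integrable.mono' (((eps_int_sq hmeas hgauss i).add
    (eps_int_sq hmeas hgauss j)).div_const 2) (((hmeas i).mul (hmeas j)).aestronglyMeasurable) ?_
  refine Eventually.of_forall fun ω => ?_
  simp only [Pi.add_apply, norm_mul, Real.norm_eq_abs]
  nlinarith [sq_nonneg (|ε i ω| - |ε j ω|), sq_abs (ε i ω), sq_abs (ε j ω),
    abs_nonneg (ε i ω), abs_nonneg (ε j ω)]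

lemma eps_cross (hindep : iIndepFun ε μ) {i j : ℕ} (hij : i ≠ j) :
    ∫ ω, ε i ω * ε j ω ∂μ = 0 := by
  have h := (hindep.indepFun hij).integral_mul_eq_mul_integral (hmeas i).aestronglyMeasurable
    (hmeas j).aestronglyMeasurable
  have h2 : ∫ ω, ε i ω * ε j ω ∂μ = integral μ (ε i * ε j) := by congr 1
  rw [h2, h, show integral μ (ε i) = ∫ ω, ε i ω ∂μ from by congr 1,
    show integral μ (ε j) = ∫ ω, ε j ω ∂μ from by congr 1,
    eps_mean hmeas hgauss i, eps_mean hmeas hgauss j, mul_zero]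

lemma secondMoment (hindep : iIndepFun ε μ) (d : ℕ → ℝ) (n : ℕ) :
    ∫ ω, (∑ j ∈ Finset.range (n + 1), ε j ω * d j) ^ 2 ∂μ
      = gM * ∑ j ∈ Finset.range (n + 1), (d j) ^ 2 := by
  have hint : ∀ i ∈ Finset.range (n+1), ∀ j ∈ Finset.range (n+1),
      Integrable (fun ω => (ε i ω * d i) * (ε j ω * d j)) μ := by
    intro i _ j _
    exact ((eps_int_mul hmeas hgauss i j).const_mul (d i * d j)).congr
      (Eventually.of_forall fun ω => by ring)
  have hrw : ∀ ω : Ω, (∑ j ∈ Finset.range (n + 1), ε j ω * d j) ^ 2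
      = ∑ i ∈ Finset.range (n+1), ∑ j ∈ Finset.range (n+1),
        (ε i ω * d i) * (ε j ω * d j) := by
    intro ω
    rw [sq, Finset.sum_mul_sum]
  simp_rw [hrw]
  rw [integral_finset_sum _ (fun i hi => integrable_finset_sum _ (fun j hj => hint i hi j hj))]
  have : ∀ i ∈ Finset.range (n+1),
      ∫ ω, ∑ j ∈ Finset.range (n+1), (ε i ω * d i) * (ε j ω * d j) ∂μ
        = (d i) ^ 2 * gM := by
    intro i hi
    rw [integral_finset_sum _ (fun j hj => hint i hi j hj)]
    rw [Finset.sum_eq_single_of_mem i hi]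
    · have h3 : ∫ ω, (ε i ω * d i) * (ε i ω * d i) ∂μ
          = (d i)^2 * ∫ ω, (ε i ω)^2 ∂μ := by
        rw [← integral_const_mul]
        congr 1; ext ω; ring
      rw [h3, eps_sq hmeas hgauss i]
    · intro j _ hji
      have h4 : ∫ ω, (ε i ω * d i) * (ε j ω * d j) ∂μ
          = (d i * d j) * ∫ ω, ε i ω * ε j ω ∂μ := by
        rw [← integral_const_mul]
        congr 1; ext ω; ring
      rw [h4, eps_cross hmeas hgauss hindep (Ne.symm hji), mul_zero]
  rw [Finset.sum_congr rfl this, ← Finset.sum_mul, mul_comm]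

lemma absMoment (hindep : iIndepFun ε μ) (d : ℕ → ℝ) (n : ℕ)
    {t : ℝ} (ht : 0 < t) (hsum : gM * ∑ j ∈ Finset.range (n + 1), (d j) ^ 2 ≤ t ^ 2) :
    ∫ ω, |∑ j ∈ Finset.range (n + 1), ε j ω * d j| ∂μ ≤ t := by
  have hintsq : Integrable (fun ω => (∑ j ∈ Finset.range (n + 1), ε j ω * d j) ^ 2) μ := by
    have hr : ∀ ω : Ω, (∑ j ∈ Finset.range (n + 1), ε j ω * d j) ^ 2
        = ∑ i ∈ Finset.range (n+1), ∑ j ∈ Finset.range (n+1),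
          (d i * d j) * (ε i ω * ε j ω) := by
      intro ω; rw [sq, Finset.sum_mul_sum]
      refine Finset.sum_congr rfl fun i _ => Finset.sum_congr rfl fun j _ => by ring
    simp_rw [hr]
    exact integrable_finset_sum _ fun i _ => integrable_finset_sum _ fun j _ =>
      (eps_int_mul hmeas hgauss i j).const_mul _
  have hmono : ∫ ω, |∑ j ∈ Finset.range (n + 1), ε j ω * d j| ∂μ
      ≤ ∫ ω, ((∑ j ∈ Finset.range (n + 1), ε j ω * d j) ^ 2 / t + t) / 2 ∂μ := by
    refine integral_mono_of_nonneg (Eventually.of_forall fun ω => abs_nonneg _)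
      (((hintsq.div_const t).add (integrable_const t)).div_const 2)
      (Eventually.of_forall fun ω => ?_)
    set Y := ∑ j ∈ Finset.range (n + 1), ε j ω * d j with hY
    show |Y| ≤ (Y ^ 2 / t + t) / 2
    rw [div_add' _ _ _ ht.ne', div_div, le_div_iff₀ (by positivity)]
    nlinarith [sq_nonneg (|Y| - t), sq_abs Y]
  refine hmono.trans ?_
  rw [integral_div, integral_add (hintsq.div_const t) (integrable_const t),
    integral_div, integral_const, secondMoment hmeas hgauss hindep d n]
  simp only [probReal_univ, ENNReal.toReal_one, smul_eq_mul, one_mul]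
  have h1 : (gM * ∑ j ∈ Finset.range (n + 1), d j ^ 2) / t ≤ t := by
    rw [div_le_iff₀ ht]
    nlinarith [hsum]
  linarith

end eps


lemma Sf_abs_le (c : ℕ → ℝ) (n m : ℕ) (y : ℝ) :
    |Sf c n m y| ≤ (∑ j ∈ Finset.range (n + 1), |c j|) * (n : ℝ) ^ m := by
  unfold Sf
  refine (Finset.abs_sum_le_sum_abs _ _).trans ?_
  rw [Finset.sum_mul]
  refine Finset.sum_le_sum fun j hj => ?_
  rw [abs_mul]
  refine mul_le_mul_of_nonneg_left ?_ (abs_nonneg _)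
  rw [abs_mul, abs_pow, Nat.abs_cast]
  calc (j:ℝ) ^ m * |Real.cos ((j:ℝ) * y + m * (π/2))| ≤ (n:ℝ) ^ m * 1 := by
        refine mul_le_mul ?_ (Real.abs_cos_le_one _) (abs_nonneg _) (by positivity)
        exact pow_le_pow_left₀ (by positivity) (Nat.cast_le.2 (Nat.lt_succ_iff.mp
          (Finset.mem_range.mp hj))) m
    _ = (n:ℝ) ^ m := mul_one _

lemma dsq_le (n m : ℕ) (u : ℝ) {j : ℕ} (hj : j ∈ Finset.range (n + 1)) :
    ((j:ℝ) ^ m * Real.cos u) ^ 2 ≤ (n:ℝ) ^ m * (n:ℝ) ^ m := by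
  have h1 : (j:ℝ) ^ m ≤ (n:ℝ) ^ m :=
    pow_le_pow_left₀ (by positivity) (Nat.cast_le.2 (Nat.lt_succ_iff.mp (Finset.mem_range.mp hj))) m
  have h3 : (0:ℝ) ≤ (j:ℝ) ^ m := by positivity
  have h4 : Real.cos u ^ 2 ≤ 1 := by
    nlinarith [Real.abs_cos_le_one u, abs_nonneg (Real.cos u), sq_abs (Real.cos u)]
  calc ((j:ℝ) ^ m * Real.cos u) ^ 2 = ((j:ℝ)^m)^2 * Real.cos u ^ 2 := by ring
    _ ≤ ((j:ℝ)^m)^2 * 1 := by gcongr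
    _ = (j:ℝ)^m * (j:ℝ)^m := by ring
    _ ≤ (n:ℝ)^m * (n:ℝ)^m := mul_le_mul h1 h1 h3 (h3.trans h1)

set_option maxHeartbeats 1000000 in
theorem statement10
    {Ω : Type*} [MeasurableSpace Ω] (μ : Measure Ω) [IsProbabilityMeasure μ]
    (ε : ℕ → Ω → ℝ)
    (hmeas : ∀ k, Measurable (ε k))
    (hindep : iIndepFun ε μ)
    (hgauss : ∀ k, Measure.map (ε k) μ = gaussianReal 0 1)
    (k : ℕ) (A : ℝ) (hA : 0 < A) :
    ∃ C : ℝ, 0 < C ∧ ∀ n : ℕ, 1 ≤ n → ∀ a b : ℝ, a ≤ b → b - a ≤ A / n →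
      (∫ ω, (⨆ y ∈ Set.Icc a b,
          |iteratedDeriv k
            (fun x => ∑ j ∈ Finset.range (n + 1), ε j ω * Real.cos (j * x)) y|) ∂μ)
        ≤ C * (n : ℝ) ^ k * Real.sqrt n := by
  have hs0 : (0:ℝ) < 2 * (gM + 1) := by nlinarith [gM_nonneg]
  set s : ℝ := Real.sqrt (2 * (gM + 1)) with hs_def
  have hs : 0 < s := Real.sqrt_pos.2 hs0
  have hssq : s ^ 2 = 2 * (gM + 1) := Real.sq_sqrt hs0.le
  refine ⟨s * (1 + A), by positivity, fun n hn a b hab hlen => ?_⟩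
  have hnpos : (0:ℝ) < n := by exact_mod_cast hn
  have hsqn : Real.sqrt n ^ 2 = (n:ℝ) := Real.sq_sqrt hnpos.le
  have hsqnpos : 0 < Real.sqrt n := Real.sqrt_pos.2 hnpos
  set t₁ : ℝ := s * (n:ℝ) ^ k * Real.sqrt n with ht₁_def
  set t₂ : ℝ := s * (n:ℝ) ^ (k+1) * Real.sqrt n with ht₂_def
  have ht₁ : 0 < t₁ := by positivity
  have ht₂ : 0 < t₂ := by positivity
  -- measure on the time interval
  set ν : Measure ℝ := volume.restrict (Set.Ioc a b) with hν_def
  have hνfin : IsFiniteMeasure ν := by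
    constructor
    rw [hν_def, Measure.restrict_apply_univ]
    exact measure_Ioc_lt_top
  -- the dominating function G
  set G : Ω → ℝ := fun ω => |Sf (fun j => ε j ω) n k a|
      + ∫ t in Set.Ioc a b, |Sf (fun j => ε j ω) n (k+1) t| with hG_def
  -- product integrability
  have hΦm : Measurable (Function.uncurry fun (ω : Ω) (t : ℝ) =>
      |Sf (fun j => ε j ω) n (k+1) t|) := by
    apply Measurable.abs
    simp only [Function.uncurry, Sf]
    apply Finset.measurable_sum
    intro j _
    have h1 : Measurable fun x : Ω × ℝ => ε j x.1 := (hmeas j).comp measurable_fst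
    have h2 : Measurable fun x : Ω × ℝ =>
        (j:ℝ) ^ (k+1) * Real.cos ((j:ℝ) * x.2 + ((k+1 : ℕ) : ℝ) * (π/2)) := by fun_prop
    exact h1.mul h2
  have hfint : Integrable (fun ω => (∑ j ∈ Finset.range (n+1), |ε j ω|) * (n:ℝ)^(k+1)) μ :=
    (integrable_finset_sum _ fun j _ => (eps_int hmeas hgauss j).abs).mul_const _
  have hΦint : Integrable (Function.uncurry fun (ω : Ω) (t : ℝ) =>
      |Sf (fun j => ε j ω) n (k+1) t|) (μ.prod ν) := by
    refine Integrable.mono' (hfint.mul_prod (integrable_const 1)) hΦm.aestronglyMeasurable ?_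
    refine Eventually.of_forall fun p => ?_
    rw [Function.uncurry, Real.norm_eq_abs, abs_abs]
    simpa using Sf_abs_le (fun j => ε j p.1) n (k+1) p.2
  have hG1int : Integrable (fun ω => |Sf (fun j => ε j ω) n k a|) μ := by
    apply Integrable.abs
    unfold Sf
    exact integrable_finset_sum _ fun j _ => (eps_int hmeas hgauss j).mul_const _
  have hG2int : Integrable (fun ω => ∫ t in Set.Ioc a b, |Sf (fun j => ε j ω) n (k+1) t|) μ :=
    hΦint.integral_prod_left
  have hGint : Integrable G μ := hG1int.add hG2int
  -- pointwise bound of the sup by G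
  have hle : ∀ ω, (⨆ y ∈ Set.Icc a b,
      |iteratedDeriv k (fun x => ∑ j ∈ Finset.range (n + 1), ε j ω * Real.cos (j * x)) y|)
      ≤ G ω := by
    intro ω
    have hG0 : 0 ≤ G ω :=
      add_nonneg (abs_nonneg _) (integral_nonneg fun t => abs_nonneg _)
    refine Real.iSup_le (fun y => Real.iSup_le (fun hy => ?_) hG0) hG0
    rw [closedForm (fun j => ε j ω) n k]
    exact ftc_bound (fun j => ε j ω) n k hy.1 hy.2
  have h0 : ∀ ω, 0 ≤ (⨆ y ∈ Set.Icc a b,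
      |iteratedDeriv k (fun x => ∑ j ∈ Finset.range (n + 1), ε j ω * Real.cos (j * x)) y|) :=
    fun ω => Real.iSup_nonneg fun y => Real.iSup_nonneg fun _ => abs_nonneg _
  refine le_trans (integral_mono_of_nonneg (Eventually.of_forall h0) hGint
    (Eventually.of_forall hle)) ?_
  rw [hG_def, integral_add hG1int hG2int]
  -- first term
  have hterm1 : ∫ ω, |Sf (fun j => ε j ω) n k a| ∂μ ≤ t₁ := by
    have hsum1 : gM * ∑ j ∈ Finset.range (n + 1),
        ((j:ℝ) ^ k * Real.cos ((j:ℝ) * a + k * (π/2))) ^ 2 ≤ t₁ ^ 2 := by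
      have hb : ∑ j ∈ Finset.range (n + 1),
          ((j:ℝ) ^ k * Real.cos ((j:ℝ) * a + k * (π/2))) ^ 2
          ≤ (n + 1 : ℝ) * ((n:ℝ)^k * (n:ℝ)^k) := by
        calc _ ≤ ∑ _j ∈ Finset.range (n + 1), ((n:ℝ)^k * (n:ℝ)^k) :=
              Finset.sum_le_sum fun j hj => dsq_le n k _ hj
          _ = (n + 1 : ℝ) * ((n:ℝ)^k * (n:ℝ)^k) := by
              rw [Finset.sum_const, Finset.card_range]; push_cast; ring
      have ht₁sq : t₁ ^ 2 = (2 * (gM + 1)) * ((n:ℝ)^k * (n:ℝ)^k) * n := by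
        rw [ht₁_def, mul_pow, mul_pow, hssq, hsqn]; ring
      rw [ht₁sq]
      have hn1 : (1:ℝ) ≤ n := by exact_mod_cast hn
      have hP : (0:ℝ) ≤ (n:ℝ)^k * (n:ℝ)^k := by positivity
      have key := mul_le_mul_of_nonneg_left hb gM_nonneg
      nlinarith [key, mul_nonneg (mul_nonneg hP gM_nonneg) (sub_nonneg.2 hn1),
        mul_nonneg hP (by linarith : (0:ℝ) ≤ 2 * (n:ℝ))]
    have := absMoment hmeas hgauss hindep
      (fun j => (j:ℝ) ^ k * Real.cos ((j:ℝ) * a + k * (π/2))) n ht₁ hsum1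
    simpa only [Sf] using this
  -- second term
  have hterm2 : (∫ ω, (∫ t in Set.Ioc a b, |Sf (fun j => ε j ω) n (k+1) t|) ∂μ)
      ≤ t₂ * (b - a) := by
    rw [show (∫ ω, (∫ t in Set.Ioc a b, |Sf (fun j => ε j ω) n (k+1) t|) ∂μ)
        = ∫ t in Set.Ioc a b, (∫ ω, |Sf (fun j => ε j ω) n (k+1) t| ∂μ) from
      integral_integral_swap hΦint]
    have hptw : ∀ t : ℝ, ∫ ω, |Sf (fun j => ε j ω) n (k+1) t| ∂μ ≤ t₂ := by
      intro t
      have hsum2 : gM * ∑ j ∈ Finset.range (n + 1),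
          ((j:ℝ) ^ (k+1) * Real.cos ((j:ℝ) * t + ((k+1 : ℕ) : ℝ) * (π/2))) ^ 2 ≤ t₂ ^ 2 := by
        have hb : ∑ j ∈ Finset.range (n + 1),
            ((j:ℝ) ^ (k+1) * Real.cos ((j:ℝ) * t + ((k+1 : ℕ) : ℝ) * (π/2))) ^ 2
            ≤ (n + 1 : ℝ) * ((n:ℝ)^(k+1) * (n:ℝ)^(k+1)) := by
          calc _ ≤ ∑ _j ∈ Finset.range (n + 1), ((n:ℝ)^(k+1) * (n:ℝ)^(k+1)) :=
                Finset.sum_le_sum fun j hj => dsq_le n (k+1) _ hj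
            _ = _ := by rw [Finset.sum_const, Finset.card_range]; push_cast; ring
        have ht₂sq : t₂ ^ 2 = (2 * (gM + 1)) * ((n:ℝ)^(k+1) * (n:ℝ)^(k+1)) * n := by
          rw [ht₂_def, mul_pow, mul_pow, hssq, hsqn]; ring
        rw [ht₂sq]
        have hn1 : (1:ℝ) ≤ n := by exact_mod_cast hn
        have hP : (0:ℝ) ≤ (n:ℝ)^(k+1) * (n:ℝ)^(k+1) := by positivity
        have key := mul_le_mul_of_nonneg_left hb gM_nonneg
        nlinarith [key, mul_nonneg (mul_nonneg hP gM_nonneg) (sub_nonneg.2 hn1),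
          mul_nonneg hP (by linarith : (0:ℝ) ≤ 2 * (n:ℝ))]
      have := absMoment hmeas hgauss hindep
        (fun j => (j:ℝ) ^ (k+1) * Real.cos ((j:ℝ) * t + ((k+1 : ℕ) : ℝ) * (π/2))) n ht₂ hsum2
      simpa only [Sf] using this
    have hmono2 : (∫ t in Set.Ioc a b, (∫ ω, |Sf (fun j => ε j ω) n (k+1) t| ∂μ))
        ≤ ∫ _t in Set.Ioc a b, (t₂ : ℝ) := by
      refine integral_mono hΦint.integral_prod_right (integrable_const _) ?_
      intro t
      exact hptw t
    have hconst : (∫ _t in Set.Ioc a b, (t₂ : ℝ)) = (b - a) * t₂ := by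
      rw [setIntegral_const, measureReal_def, Real.volume_Ioc, ENNReal.toReal_ofReal (sub_nonneg.2 hab),
        smul_eq_mul]
    rw [mul_comm t₂ (b - a)] at *
    exact hmono2.trans (le_of_eq hconst)
  refine le_trans (add_le_add hterm1 hterm2) ?_
  -- arithmetic: t₁ + t₂ * (b - a) ≤ s * (1 + A) * n^k * √n
  have hlen' : t₂ * (b - a) ≤ s * A * (n:ℝ)^k * Real.sqrt n := by
    have h1 : t₂ * (b - a) ≤ t₂ * (A / n) := mul_le_mul_of_nonneg_left hlen ht₂.le
    refine h1.trans ?_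
    rw [ht₂_def]
    rw [show s * (n:ℝ)^(k+1) * Real.sqrt n * (A / n) = s * A * ((n:ℝ)^(k+1) / n) * Real.sqrt n
      from by ring]
    rw [pow_succ, mul_div_assoc, div_self hnpos.ne', mul_one]
  rw [ht₁_def] at *
  nlinarith [hlen', hs.le, hsqnpos.le, hA.le]
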